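/- Let G be a finite simple graph, R ⊆ V(G) a clique modulator (i.e., V(G)∖R is a clique), and γ the Grundy number of G. Then there exists a Grundy coloring (C_1, …, C_γ) of G and an index i such that C_j ∩ R ≠ ∅ for all j ≤ i, while for all j > i, C_j ∩ R = ∅ and |C_j| = 1. -/

import Mathlib

variable {V : Type*} [Fintype V] [DecidableEq V]

/-- A Grundy coloring of the vertex set `X` of `G`: an ordered partition of `X`
into nonempty independent sets such that every vertex of the `i`-th class has a
neighbor in every earlier class. -/
def GrundyColoringOn (G : SimpleGraph V) (X : Finset V) (C : List (Finset V)) : Prop :=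
  (∀ A ∈ C, A.Nonempty) ∧
  C.Pairwise Disjoint ∧
  (∀ v, v ∈ X ↔ ∃ A ∈ C, v ∈ A) ∧
  (∀ A ∈ C, ∀ u ∈ A, ∀ w ∈ A, ¬ G.Adj u w) ∧
  (∀ i j : ℕ, ∀ hi : i < C.length, ∀ hj : j < C.length, j < i →
     ∀ v ∈ C.get ⟨i, hi⟩, ∃ u ∈ C.get ⟨j, hj⟩, G.Adj u v)

/-- The set of lengths of Grundy colorings of `X` in `G`; its greatest element
is the Grundy number of the induced subgraph `G[X]`. -/
def grundySet (G : SimpleGraph V) (X : Finset V) : Set ℕ :=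
  {n | ∃ C : List (Finset V), GrundyColoringOn G X C ∧ C.length = n}

theorem stmt5 (G : SimpleGraph V) (R : Finset V)
    (hclique : G.IsClique ↑(Finset.univ \ R)) (γ : ℕ)
    (hγ : IsGreatest (grundySet G Finset.univ) γ) :
    ∃ C : List (Finset V), GrundyColoringOn G Finset.univ C ∧ C.length = γ ∧
      ∃ i, ∀ j, ∀ hj : j < C.length,
        (j < i → ((C.get ⟨j, hj⟩) ∩ R).Nonempty) ∧
        (i ≤ j → (C.get ⟨j, hj⟩) ∩ R = ∅ ∧ (C.get ⟨j, hj⟩).card = 1) := by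
  classical
  obtain ⟨⟨C, ⟨h1, h2, h3, h4, h5⟩, hlen⟩, -⟩ := hγ
  set Rel : Finset V → Finset V → Prop :=
    fun A B => ∀ v ∈ B, ∃ u ∈ A, G.Adj u v with hReldef
  have hpw : C.Pairwise Rel := by
    rw [List.pairwise_iff_get]
    intro i j hij v hv
    exact h5 j i j.isLt i.isLt hij v hv
  set p : Finset V → Bool := fun A => decide ((A ∩ R).Nonempty) with hpdef
  set L1 := C.filter p with hL1
  set L2 := C.filter (fun A => !p A) with hL2
  have hperm : (L1 ++ L2).Perm C := List.filter_append_perm p C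
  -- classes disjoint from R are singletons
  have hsing : ∀ A ∈ C, A ∩ R = ∅ → A.card = 1 := by
    intro A hA hAR
    obtain ⟨x, hx⟩ := h1 A hA
    have hxA : A = {x} := by
      apply Finset.eq_singleton_iff_unique_mem.mpr
      refine ⟨hx, fun y hy => ?_⟩
      by_contra hne
      have hxR : x ∉ R := fun h =>
        (Finset.eq_empty_iff_forall_notMem.mp hAR x) (Finset.mem_inter.mpr ⟨hx, h⟩)
      have hyR : y ∉ R := fun h =>
        (Finset.eq_empty_iff_forall_notMem.mp hAR y) (Finset.mem_inter.mpr ⟨hy, h⟩)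
      have hadj : G.Adj y x := hclique (by simp [hyR]) (by simp [hxR]) hne
      exact h4 A hA y hy x hx hadj
    simp [hxA]
  -- either direction of Rel between distinct classes
  have hor : ∀ a ∈ C, ∀ b ∈ C, a ≠ b → Rel a b ∨ Rel b a := by
    have hsymm : Symmetric (fun a b => Rel a b ∨ Rel b a) := by
      intro a b h; tauto
    exact fun a ha b hb hab =>
      haveI : Std.Symm (fun a b => Rel a b ∨ Rel b a) := ⟨fun a b h => hsymm h⟩
      (hpw.imp (fun h => Or.inl h) : C.Pairwise (fun a b => Rel a b ∨ Rel b a)).forall ha hb hab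
  -- the reordered coloring is pairwise Rel
  have hD5 : (L1 ++ L2).Pairwise Rel := by
    rw [List.pairwise_append]
    refine ⟨hpw.sublist List.filter_sublist, hpw.sublist List.filter_sublist, ?_⟩
    intro a ha b hb
    rw [hL1, List.mem_filter] at ha
    rw [hL2, List.mem_filter] at hb
    have hpa : (a ∩ R).Nonempty := by
      have := ha.2; simpa [hpdef] using this
    have hpb : b ∩ R = ∅ := by
      have := hb.2
      simp only [hpdef, Bool.not_eq_true', decide_eq_false_iff_not] at this
      exact Finset.not_nonempty_iff_eq_empty.mp this
    have hab : a ≠ b := by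
      intro h; rw [h] at hpa; rw [hpb] at hpa; exact Finset.not_nonempty_empty hpa
    rcases hor a ha.1 b hb.1 hab with h | h
    · exact h
    · -- b is a singleton {x}; every vertex of a is adjacent to x
      obtain ⟨x, hbx⟩ := Finset.card_eq_one.mp (hsing b hb.1 hpb)
      intro v hv
      rw [hbx, Finset.mem_singleton] at hv
      subst hv
      obtain ⟨w, hw⟩ := hpa
      have hwa : w ∈ a := (Finset.mem_inter.mp hw).1
      obtain ⟨u, hu, hadj⟩ := h w hwa
      rw [hbx, Finset.mem_singleton] at hu
      subst hu
      exact ⟨w, hwa, hadj.symm⟩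
  refine ⟨L1 ++ L2, ⟨?_, ?_, ?_, ?_, ?_⟩, ?_, L1.length, ?_⟩
  · intro A hA; exact h1 A (hperm.mem_iff.mp hA)
  · exact (hperm.pairwise_iff (fun h => h.symm)).mpr h2
  · intro v
    rw [h3 v]
    constructor
    · rintro ⟨A, hA, hv⟩; exact ⟨A, hperm.mem_iff.mpr hA, hv⟩
    · rintro ⟨A, hA, hv⟩; exact ⟨A, hperm.mem_iff.mp hA, hv⟩
  · intro A hA; exact h4 A (hperm.mem_iff.mp hA)
  · intro i j hi hj hij v hv
    exact List.pairwise_iff_get.mp hD5 ⟨j, hj⟩ ⟨i, hi⟩ hij v hv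
  · rw [hperm.length_eq, hlen]
  · intro j hj
    constructor
    · intro hji
      have hget : (L1 ++ L2).get ⟨j, hj⟩ = L1[j]'hji := List.getElem_append_left hji
      have hmem : (L1 ++ L2).get ⟨j, hj⟩ ∈ L1 := by
        simp only [hget]; exact List.getElem_mem _
      have hmem2 := (List.mem_filter.mp hmem).2
      simpa [hpdef] using hmem2
    · intro hij
      have hj2 : j - L1.length < L2.length := by
        have := hj
        rw [List.length_append] at this
        omega
      have hget : (L1 ++ L2).get ⟨j, hj⟩ = L2[j - L1.length]'hj2 :=
        List.getElem_append_right hij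
      have hmem : (L1 ++ L2).get ⟨j, hj⟩ ∈ L2 := by
        simp only [hget]; exact List.getElem_mem _
      have hmem' := List.mem_filter.mp hmem
      have hempty : (L1 ++ L2).get ⟨j, hj⟩ ∩ R = ∅ := by
        have := hmem'.2
        simp only [hpdef, Bool.not_eq_true', decide_eq_false_iff_not] at this
        exact Finset.not_nonempty_iff_eq_empty.mp this
      exact ⟨hempty, hsing _ hmem'.1 hempty⟩
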